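/- For any commutative Noetherian ring R, Γ_E(R) is not a finite regular graph with more than two vertices; i.e., if Γ_E(R) is finite with at least 3 vertices, then there exist vertices of different degrees. -/

import Mathlib

open scoped Classical

noncomputable section

/-- The annihilator ideal of an element `x` of a commutative ring `R`. -/
def ann (R : Type*) [CommRing R] (x : R) : Ideal R := Ideal.torsionOf R R x

/-- The type of nonzero zero divisors of `R`. -/
def ZD (R : Type*) [CommRing R] : Type _ :=
  {x : R // x ≠ 0 ∧ ∃ y : R, y ≠ 0 ∧ x * y = 0}

/-- Two zero divisors are equivalent iff they have the same annihilator. -/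
instance annSetoid (R : Type*) [CommRing R] : Setoid (ZD R) :=
  ⟨fun a b => ann R a.1 = ann R b.1,
   fun _ => rfl, Eq.symm, Eq.trans⟩

/-- The vertex set of `Γ_E(R)`: equivalence classes of nonzero zero divisors. -/
def GammaEV (R : Type*) [CommRing R] : Type _ := Quotient (annSetoid R)

/-- The class of a nonzero zero divisor. -/
def cls (R : Type*) [CommRing R] (a : ZD R) : GammaEV R :=
  Quotient.mk (annSetoid R) a

/-- The graph `Γ_E(R)` of equivalence classes of zero divisors. -/
def gammaE (R : Type*) [CommRing R] : SimpleGraph (GammaEV R) where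
  Adj u v := u ≠ v ∧ ∃ a b : ZD R, cls R a = u ∧ cls R b = v ∧ a.1 * b.1 = 0
  symm := by
    constructor
    rintro u v ⟨huv, a, b, ha, hb, hab⟩
    exact ⟨huv.symm, b, a, hb, ha, by rwa [mul_comm] at hab⟩
  loopless := by constructor; rintro u ⟨h, -⟩; exact h rfl

/-- `I` is a maximal element of the family `F = {ann x : 0 ≠ x ∈ R}`. -/
def MaxAnn (R : Type*) [CommRing R] (I : Ideal R) : Prop :=
  (∃ x : R, x ≠ 0 ∧ I = ann R x) ∧
    ∀ y : R, y ≠ 0 → I ≤ ann R y → I = ann R y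

section helpers
variable {R : Type*} [CommRing R]

lemma mem_ann_iff {a x : R} : a ∈ ann R x ↔ a * x = 0 := by
  rw [ann, Ideal.mem_torsionOf_iff, smul_eq_mul]

lemma cls_eq_iff {a b : ZD R} : cls R a = cls R b ↔ ann R a.1 = ann R b.1 :=
  ⟨fun h => Quotient.exact h, fun h => Quotient.sound h⟩

lemma cls_exists_rep (u : GammaEV R) : ∃ a : ZD R, cls R a = u :=
  Quotient.exists_rep u

lemma adj_iff' {a b : ZD R} :
    (gammaE R).Adj (cls R a) (cls R b) ↔ cls R a ≠ cls R b ∧ a.1 * b.1 = 0 := by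
  constructor
  · rintro ⟨hne, a', b', ha, hb, h0⟩
    refine ⟨hne, ?_⟩
    have haa : ann R a'.1 = ann R a.1 := cls_eq_iff.mp ha
    have hbb : ann R b'.1 = ann R b.1 := cls_eq_iff.mp hb
    have h1 : b'.1 ∈ ann R a.1 := haa ▸ mem_ann_iff.mpr (by rwa [mul_comm] at h0)
    have h2 : a.1 ∈ ann R b.1 := hbb ▸ mem_ann_iff.mpr (by rw [mul_comm]; exact mem_ann_iff.mp h1)
    exact mem_ann_iff.mp h2
  · rintro ⟨hne, h0⟩
    exact ⟨hne, a, b, rfl, rfl, h0⟩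

lemma mem_nbhd_iff {a b : ZD R} :
    cls R b ∈ (gammaE R).neighborSet (cls R a) ↔ cls R a ≠ cls R b ∧ a.1 * b.1 = 0 := by
  rw [SimpleGraph.mem_neighborSet, adj_iff']

lemma ann_neg (t : R) : ann R (-t) = ann R t := by
  ext a; simp [mem_ann_iff]

end helpers

theorem stmt8 (R : Type*) [CommRing R] [IsNoetherianRing R] [Finite (GammaEV R)]
    (hcard : 3 ≤ Nat.card (GammaEV R)) :
    ∃ u v : GammaEV R,
      ((gammaE R).neighborSet u).ncard ≠ ((gammaE R).neighborSet v).ncard := by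
  by_contra hreg
  push_neg at hreg
  -- a third vertex distinct from any two given ones
  have hthird : ∀ a b : GammaEV R, ∃ u : GammaEV R, u ≠ a ∧ u ≠ b := by
    intro a b
    by_contra hc
    push_neg at hc
    have hsub : (Set.univ : Set (GammaEV R)) ⊆ {a, b} := by
      intro u _
      by_cases h : u = a
      · exact Or.inl h
      · exact Or.inr (hc u h)
    have h1 : (Set.univ : Set (GammaEV R)).ncard ≤ ({a, b} : Set (GammaEV R)).ncard :=
      Set.ncard_le_ncard hsub (Set.toFinite _)
    have h2 : ({a, b} : Set (GammaEV R)).ncard ≤ 2 := by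
      have := Set.ncard_insert_le a ({b} : Set (GammaEV R))
      simpa [Set.ncard_singleton] using this
    rw [Set.ncard_univ] at h1
    omega
  -- there exists a vertex, hence a zero divisor
  have hpos : 0 < Nat.card (GammaEV R) := by omega
  obtain ⟨u0⟩ := (Nat.card_pos_iff.mp hpos).1
  obtain ⟨z0, -⟩ := cls_exists_rep u0
  obtain ⟨hz00, y0, hy00, hz0y0⟩ := z0.2
  -- maximal annihilator
  obtain ⟨I, hImem, hImax⟩ :=
    (set_has_maximal_iff_noetherian.mpr (inferInstance : IsNoetherianRing R))
      {I : Ideal R | ∃ v : R, v ≠ 0 ∧ (∃ w : R, w ≠ 0 ∧ v * w = 0) ∧ I = ann R v}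
      ⟨ann R z0.1, z0.1, hz00, ⟨y0, hy00, hz0y0⟩, rfl⟩
  obtain ⟨x, hx0, ⟨w, hw0, hxw⟩, rfl⟩ := hImem
  -- maximality over all nonzero elements
  have hmax : ∀ y : R, y ≠ 0 → ann R x ≤ ann R y → ann R x = ann R y := by
    intro y hy hle
    have hyzd : ∃ w : R, w ≠ 0 ∧ y * w = 0 := by
      refine ⟨w, hw0, ?_⟩
      have : w ∈ ann R x := mem_ann_iff.mpr (by rwa [mul_comm] at hxw)
      have := mem_ann_iff.mp (hle this)
      rwa [mul_comm] at this
    have hnlt := hImax (ann R y) ⟨y, hy, hyzd, rfl⟩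
    exact (eq_of_le_of_not_lt hle hnlt)
  set N := (gammaE R).neighborSet with hN
  have hwx : w * x = 0 := by rwa [mul_comm] at hxw
  let xz : ZD R := ⟨x, hx0, w, hw0, hxw⟩
  have hxz1 : xz.1 = x := rfl
  -- F1 : if z*x ≠ 0 then ann z ≤ ann x
  have hann_sub : ∀ z : ZD R, z.1 * x ≠ 0 → ∀ a : R, a * z.1 = 0 → a * x = 0 := by
    intro z hzx a haz
    have hle : ann R x ≤ ann R (z.1 * x) := by
      intro c hc
      have : c * x = 0 := mem_ann_iff.mp hc
      exact mem_ann_iff.mpr (by rw [mul_comm z.1 x, ← mul_assoc, this, zero_mul])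
    have heq := hmax (z.1 * x) hzx hle
    have : a ∈ ann R (z.1 * x) := mem_ann_iff.mpr (by rw [← mul_assoc, haz, zero_mul])
    rw [← heq] at this
    exact mem_ann_iff.mp this
  -- all "outside" vertices have the same neighborhood as x
  have hQeq : ∀ z : ZD R, z.1 * x ≠ 0 → N (cls R z) = N (cls R xz) := by
    intro z hzx
    have hsub : N (cls R z) ⊆ N (cls R xz) := by
      intro u hu
      obtain ⟨c, rfl⟩ := cls_exists_rep u
      obtain ⟨-, hzc⟩ := mem_nbhd_iff.mp hu
      have hcx : c.1 * x = 0 := hann_sub z hzx c.1 (by rwa [mul_comm] at hzc)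
      refine mem_nbhd_iff.mpr ⟨?_, by rwa [hxz1, mul_comm]⟩
      intro heq
      have : ann R x = ann R c.1 := by simpa [hxz1] using cls_eq_iff.mp heq
      have : z.1 ∈ ann R c.1 := mem_ann_iff.mpr hzc
      rw [← ‹ann R x = ann R c.1›] at this
      exact hzx (mem_ann_iff.mp this)
    exact Set.eq_of_subset_of_ncard_le hsub (le_of_eq (hreg _ _)) (Set.toFinite _)
  by_cases hx2 : x * x = 0
  · -- Case A : x² = 0
    by_cases hA : ∃ z : ZD R, z.1 * x ≠ 0
    · -- Subcase A1
      obtain ⟨z, hzx⟩ := hA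
      obtain ⟨hz0, b, hb0, hzb⟩ := z.2
      have hbz : b * z.1 = 0 := by rwa [mul_comm] at hzb
      have hbx : b * x = 0 := hann_sub z hzx b hbz
      let zb : ZD R := ⟨b, hb0, z.1, hz0, hbz⟩
      have hzb1 : zb.1 = b := rfl
      have hbzne : cls R zb ≠ cls R z := by
        intro h
        have hann : ann R b = ann R z.1 := cls_eq_iff.mp h
        have : x ∈ ann R b := mem_ann_iff.mpr (by rwa [mul_comm] at hbx)
        rw [hann] at this
        exact hzx (by rw [mul_comm]; exact mem_ann_iff.mp this)
      have hbxne : cls R zb ≠ cls R xz := by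
        intro h
        have hann : ann R b = ann R x := by simpa [hxz1] using cls_eq_iff.mp h
        have : z.1 ∈ ann R b := mem_ann_iff.mpr hzb
        rw [hann] at this
        exact hzx (mem_ann_iff.mp this)
      -- s = x + b has the same annihilator as x
      have hs0 : x + b ≠ 0 := by
        intro h
        have hb : b = -x := by linear_combination h
        rw [hb, mul_neg, neg_eq_zero] at hzb
        exact hzx hzb
      have hsx : (x + b) * x = 0 := by rw [add_mul, hx2, hbx, add_zero]
      let zs : ZD R := ⟨x + b, hs0, x, hx0, hsx⟩
      have hzs : z.1 * (x + b) ≠ 0 := by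
        rw [mul_add, hzb, add_zero]; exact hzx
      have hclss : cls R zs = cls R xz := by
        by_contra h
        have hmem : cls R zs ∈ N (cls R xz) := by
          refine mem_nbhd_iff.mpr ⟨fun h' => h h'.symm, ?_⟩
          rw [hxz1, mul_comm]; exact hsx
        rw [← hQeq z hzx] at hmem
        obtain ⟨-, hz⟩ := mem_nbhd_iff.mp hmem
        exact hzs hz
      have hanns : ann R (x + b) = ann R x := by simpa [hxz1] using cls_eq_iff.mp hclss
      -- key : everything killed by z is killed by b
      have keyA : ∀ c : ZD R, z.1 * c.1 = 0 → b * c.1 = 0 := by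
        intro c hzc
        have hcx : c.1 * x = 0 := hann_sub z hzx c.1 (by rwa [mul_comm] at hzc)
        have : c.1 ∈ ann R (x + b) := by rw [hanns]; exact mem_ann_iff.mpr hcx
        have hcs : c.1 * (x + b) = 0 := mem_ann_iff.mp this
        rw [mul_add, hcx, zero_add] at hcs
        rwa [mul_comm] at hcs
      -- memberships
      have hxz_ne_z : cls R xz ≠ cls R z := by
        intro h
        have hann : ann R x = ann R z.1 := by simpa [hxz1] using cls_eq_iff.mp h
        have : x ∈ ann R x := mem_ann_iff.mpr hx2
        rw [hann] at this
        exact hzx (by rw [mul_comm]; exact mem_ann_iff.mp this)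
      have hx_mem : cls R xz ∈ N (cls R zb) :=
        mem_nbhd_iff.mpr ⟨hbxne, by rw [hzb1, hxz1]; exact hbx⟩
      have hz_mem : cls R z ∈ N (cls R zb) :=
        mem_nbhd_iff.mpr ⟨hbzne, hbz⟩
      have hNsub : N (cls R xz) ⊆ insert (cls R zb) (N (cls R zb)) := by
        intro u hu
        obtain ⟨c, rfl⟩ := cls_exists_rep u
        rw [← hQeq z hzx] at hu
        obtain ⟨-, hzc⟩ := mem_nbhd_iff.mp hu
        have hbc : b * c.1 = 0 := keyA c hzc
        by_cases h : cls R zb = cls R c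
        · exact Set.mem_insert_iff.mpr (Or.inl h.symm)
        · exact Set.mem_insert_iff.mpr (Or.inr (mem_nbhd_iff.mpr ⟨h, hbc⟩))
      have hz_not : cls R z ∉ N (cls R xz) := by
        intro h
        obtain ⟨-, hxz'⟩ := mem_nbhd_iff.mp h
        rw [hxz1] at hxz'
        exact hzx (by rwa [mul_comm] at hxz')
      have hx_not : cls R xz ∉ N (cls R xz) := fun h =>
        (gammaE R).irrefl ((SimpleGraph.mem_neighborSet _ _ _).mp h)
      have hb_not : cls R zb ∉ N (cls R zb) := fun h =>
        (gammaE R).irrefl ((SimpleGraph.mem_neighborSet _ _ _).mp h)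
      -- cardinality contradiction
      have hTsub : insert (cls R xz) (insert (cls R z) (N (cls R xz)))
          ⊆ insert (cls R zb) (N (cls R zb)) := by
        intro u hu
        rcases Set.mem_insert_iff.mp hu with h | hu
        · exact Set.mem_insert_iff.mpr (Or.inr (h ▸ hx_mem))
        rcases Set.mem_insert_iff.mp hu with h | hu
        · exact Set.mem_insert_iff.mpr (Or.inr (h ▸ hz_mem))
        · exact hNsub hu
      have hc1 : (insert (cls R z) (N (cls R xz))).ncard = (N (cls R xz)).ncard + 1 :=
        Set.ncard_insert_of_notMem hz_not (Set.toFinite _)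
      have hc2 : (insert (cls R xz) (insert (cls R z) (N (cls R xz)))).ncard
          = (insert (cls R z) (N (cls R xz))).ncard + 1 := by
        refine Set.ncard_insert_of_notMem ?_ (Set.toFinite _)
        intro h
        rcases Set.mem_insert_iff.mp h with h | h
        · exact hxz_ne_z h
        · exact hx_not h
      have hc3 : (insert (cls R zb) (N (cls R zb))).ncard = (N (cls R zb)).ncard + 1 :=
        Set.ncard_insert_of_notMem hb_not (Set.toFinite _)
      have hle := Set.ncard_le_ncard hTsub (Set.toFinite _)
      have heqd : (N (cls R zb)).ncard = (N (cls R xz)).ncard := hreg _ _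
      omega
    · -- Subcase A2 : every zero divisor is killed by x
      push_neg at hA
      -- the graph is complete
      have hNfull : ∀ u : GammaEV R, N u = Set.univ \ {u} := by
        intro u
        have hsub : ∀ v : GammaEV R, N v ⊆ Set.univ \ {v} := by
          intro v t ht
          exact ⟨Set.mem_univ _, fun h => (gammaE R).irrefl
            (h ▸ (SimpleGraph.mem_neighborSet _ _ _).mp ht)⟩
        have hxfull : N (cls R xz) = Set.univ \ {cls R xz} := by
          refine Set.Subset.antisymm (hsub _) ?_
          intro t ht
          obtain ⟨c, rfl⟩ := cls_exists_rep t
          refine mem_nbhd_iff.mpr ⟨fun h => ht.2 h.symm, ?_⟩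
          rw [hxz1, mul_comm]; exact hA c
        have hcardeq : (Set.univ \ {u} : Set (GammaEV R)).ncard = (N u).ncard := by
          have h1 : (Set.univ \ {u} : Set (GammaEV R)).ncard = Nat.card (GammaEV R) - 1 := by
            rw [Set.ncard_diff_singleton_of_mem (Set.mem_univ u),
              Set.ncard_univ]
          have h2 : (Set.univ \ {cls R xz} : Set (GammaEV R)).ncard
              = Nat.card (GammaEV R) - 1 := by
            rw [Set.ncard_diff_singleton_of_mem (Set.mem_univ _),
              Set.ncard_univ]
          rw [h1, ← h2, ← hxfull, hreg (cls R xz) u]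
        exact (Set.eq_of_subset_of_ncard_le (hsub u) (le_of_eq hcardeq) (Set.toFinite _))
      have hcomp : ∀ a c : ZD R, cls R a ≠ cls R c → a.1 * c.1 = 0 := by
        intro a c hne
        have : cls R c ∈ N (cls R a) := by
          rw [hNfull]; exact ⟨Set.mem_univ _, fun h => hne h.symm⟩
        exact (mem_nbhd_iff.mp this).2
      -- for any two distinct classes, one has square zero
      have pair : ∀ a c : ZD R, cls R a ≠ cls R c → a.1 * a.1 = 0 ∨ c.1 * c.1 = 0 := by
        intro a c hne
        have hac : a.1 * c.1 = 0 := hcomp a c hne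
        have hca : c.1 * a.1 = 0 := by rwa [mul_comm] at hac
        have hs0 : a.1 + c.1 ≠ 0 := by
          intro h
          have hc : c.1 = -a.1 := by linear_combination h
          have hann : ann R a.1 = ann R c.1 := by rw [hc, ann_neg]
          exact hne (cls_eq_iff.mpr hann)
        have hsx : (a.1 + c.1) * x = 0 := by
          rw [add_mul]
          have h1 : a.1 * x = 0 := hA a
          have h2 : c.1 * x = 0 := hA c
          rw [h1, h2, add_zero]
        let zs : ZD R := ⟨a.1 + c.1, hs0, x, hx0, hsx⟩
        by_cases h : cls R zs = cls R a
        · right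
          have hann : ann R (a.1 + c.1) = ann R a.1 := cls_eq_iff.mp h
          have : c.1 ∈ ann R (a.1 + c.1) := by rw [hann]; exact mem_ann_iff.mpr hca
          have := mem_ann_iff.mp this
          rw [mul_add, hca, zero_add] at this
          exact this
        · left
          have := hcomp zs a h
          have h' : (a.1 + c.1) * a.1 = 0 := this
          rw [add_mul, hca, add_zero] at h'
          exact h'
      -- square-zero elements are in the class of x
      have sqzero : ∀ a : ZD R, a.1 * a.1 = 0 → cls R a = cls R xz := by
        intro a ha
        have hle : ann R x ≤ ann R a.1 := by
          intro t ht
          have htx : t * x = 0 := mem_ann_iff.mp ht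
          by_cases ht0 : t = 0
          · rw [ht0]; exact (ann R a.1).zero_mem
          let zt : ZD R := ⟨t, ht0, x, hx0, htx⟩
          by_cases h : cls R zt = cls R a
          · have hann : ann R t = ann R a.1 := cls_eq_iff.mp h
            have : a.1 ∈ ann R t := by rw [hann]; exact mem_ann_iff.mpr ha
            have := mem_ann_iff.mp this
            exact mem_ann_iff.mpr (by rwa [mul_comm] at this)
          · exact mem_ann_iff.mpr (hcomp zt a h)
        have := hmax a.1 a.2.1 hle
        exact cls_eq_iff.mpr (by rw [hxz1, this])
      -- find three distinct classes
      obtain ⟨u2, hu21, -⟩ := hthird u0 u0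
      obtain ⟨u3, hu31, hu32⟩ := hthird u0 u2
      obtain ⟨a1, ha1⟩ := cls_exists_rep u0
      obtain ⟨a2, ha2⟩ := cls_exists_rep u2
      obtain ⟨a3, ha3⟩ := cls_exists_rep u3
      have h12 : cls R a1 ≠ cls R a2 := by rw [ha1, ha2]; exact fun h => hu21 h.symm
      have h13 : cls R a1 ≠ cls R a3 := by rw [ha1, ha3]; exact fun h => hu31 h.symm
      have h23 : cls R a2 ≠ cls R a3 := by rw [ha2, ha3]; exact fun h => hu32 h.symm
      rcases pair a1 a2 h12 with h1 | h2
      · rcases pair a2 a3 h23 with h2 | h3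
        · exact h12 ((sqzero a1 h1).trans (sqzero a2 h2).symm)
        · exact h13 ((sqzero a1 h1).trans (sqzero a3 h3).symm)
      · rcases pair a1 a3 h13 with h1 | h3
        · exact h12 ((sqzero a1 h1).trans (sqzero a2 h2).symm)
        · exact h23 ((sqzero a2 h2).trans (sqzero a3 h3).symm)
  · -- Case B : x² ≠ 0
    have hPmem : ∀ c : ZD R, c.1 * x = 0 → cls R c ∈ N (cls R xz) := by
      intro c hcx
      refine mem_nbhd_iff.mpr ⟨?_, by rw [hxz1, mul_comm]; exact hcx⟩
      intro h
      have hann : ann R x = ann R c.1 := by simpa [hxz1] using cls_eq_iff.mp h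
      have : x ∈ ann R c.1 := mem_ann_iff.mpr (by rwa [mul_comm] at hcx)
      rw [← hann] at this
      exact hx2 (mem_ann_iff.mp this)
    have key1 : ∀ b d : R, b ≠ 0 → d ≠ 0 → b * x = 0 → d * x = 0 → b * d = 0 → False := by
      intro b d hb0 hd0 hbx hdx hbd
      have hs0 : x + b ≠ 0 := by
        intro h
        have hb : b = -x := by linear_combination h
        rw [hb, neg_mul, neg_eq_zero] at hbx
        exact hx2 hbx
      have hsd : (x + b) * d = 0 := by
        rw [add_mul, hbd, add_zero, mul_comm]
        exact hdx
      let zs : ZD R := ⟨x + b, hs0, d, hd0, hsd⟩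
      have hszx : (x + b) * x ≠ 0 := by
        rw [add_mul, hbx, add_zero]
        exact hx2
      have hNeq := hQeq zs hszx
      have hbkill : ∀ c : ZD R, c.1 * x = 0 → b * c.1 = 0 := by
        intro c hcx
        have hmem : cls R c ∈ N (cls R zs) := hNeq ▸ hPmem c hcx
        obtain ⟨-, hsc⟩ := mem_nbhd_iff.mp hmem
        have : (x + b) * c.1 = 0 := hsc
        rw [add_mul, mul_comm x c.1, hcx, zero_add] at this
        exact this
      have hle : ann R x ≤ ann R b := by
        intro a ha
        have hax : a * x = 0 := mem_ann_iff.mp ha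
        by_cases ha0 : a = 0
        · rw [ha0]; exact (ann R b).zero_mem
        · have := hbkill ⟨a, ha0, x, hx0, hax⟩ hax
          exact mem_ann_iff.mpr (by rwa [mul_comm] at this)
      have heq := hmax b hb0 hle
      have : x ∈ ann R b := mem_ann_iff.mpr (by rwa [mul_comm] at hbx)
      rw [← heq] at this
      exact hx2 (mem_ann_iff.mp this)
    let zb : ZD R := ⟨w, hw0, x, hx0, hwx⟩
    have hzb1 : zb.1 = w := rfl
    -- all elements of p \ {0} have the same annihilator
    have hsub2 : ∀ c d : ZD R, c.1 * x = 0 → d.1 * x = 0 → ann R c.1 ≤ ann R d.1 := by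
      intro c d hcx hdx a ha
      have hac : a * c.1 = 0 := mem_ann_iff.mp ha
      by_cases ha0 : a = 0
      · rw [ha0]; exact (ann R d.1).zero_mem
      have hax : a * x ≠ 0 := by
        intro h
        exact key1 a c.1 ha0 c.2.1 h hcx hac
      let za : ZD R := ⟨a, ha0, c.1, c.2.1, hac⟩
      have hNeq := hQeq za hax
      have hmem : cls R d ∈ N (cls R za) := hNeq ▸ hPmem d hdx
      obtain ⟨-, had⟩ := mem_nbhd_iff.mp hmem
      exact mem_ann_iff.mpr had
    have key2 : ∀ c : ZD R, c.1 * x = 0 → ann R c.1 = ann R w :=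
      fun c hc => le_antisymm (hsub2 c zb hc hwx) (hsub2 zb c hwx hc)
    have hNx : N (cls R xz) = {cls R zb} := by
      apply Set.Subset.antisymm
      · intro u hu
        obtain ⟨c, rfl⟩ := cls_exists_rep u
        obtain ⟨-, hxc⟩ := mem_nbhd_iff.mp hu
        rw [hxz1] at hxc
        have hcx : c.1 * x = 0 := by rwa [mul_comm] at hxc
        exact Set.mem_singleton_iff.mpr (cls_eq_iff.mpr (key2 c hcx))
      · intro u hu
        rw [Set.mem_singleton_iff.mp hu]
        exact hPmem zb hwx
    obtain ⟨u, hux, hub⟩ := hthird (cls R xz) (cls R zb)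
    obtain ⟨v, rfl⟩ := cls_exists_rep u
    have hvx : v.1 * x ≠ 0 := by
      intro h
      exact hub (cls_eq_iff.mpr (key2 v h))
    have hmem : cls R zb ∈ N (cls R v) := by
      rw [hQeq v hvx, hNx]; exact rfl
    have hv_mem : cls R v ∈ N (cls R zb) :=
      (SimpleGraph.mem_neighborSet _ _ _).mpr
        (((SimpleGraph.mem_neighborSet _ _ _).mp hmem).symm)
    have hx_mem : cls R xz ∈ N (cls R zb) :=
      (SimpleGraph.mem_neighborSet _ _ _).mpr
        (((SimpleGraph.mem_neighborSet _ _ _).mp (hPmem zb hwx)).symm)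
    have hpair : ({cls R xz, cls R v} : Set (GammaEV R)) ⊆ N (cls R zb) := by
      intro t ht
      rcases Set.mem_insert_iff.mp ht with h | h
      · exact h ▸ hx_mem
      · exact (Set.mem_singleton_iff.mp h) ▸ hv_mem
    have h2 : ({cls R xz, cls R v} : Set (GammaEV R)).ncard = 2 :=
      Set.ncard_pair (fun h => hux h.symm)
    have hle := Set.ncard_le_ncard hpair (Set.toFinite _)
    rw [h2] at hle
    have h1 : (N (cls R xz)).ncard = 1 := by rw [hNx, Set.ncard_singleton]
    have := hreg (cls R zb) (cls R xz)
    omega
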